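/- arXiv:1006.1436 — 6 statements merged into one kernel-verified Lean document; each statement's English description precedes it below -/
import Mathlib

section
/- Let u = x_{i_1}⋯x_{i_r} and v = x_{j_1}⋯x_{j_s} be monomials in weakly increasing factorization with r ≥ s. Define ℓ_t = min(i_t, j_t) for t ≤ s and ℓ_t = i_t for s < t ≤ r, and let w = x_{ℓ_1}⋯x_{ℓ_r}. Then Borel(u) ∩ Borel(v) = Borel(w). -/
/-- Borel order: `m1` precedes `m2`. -/
def BorelLe (m1 m2 : Multiset ℕ) : Prop :=
  Multiset.card m2 ≤ Multiset.card m1 ∧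
    ∀ j < Multiset.card m2,
      (m1.sort (· ≤ ·)).getD j 0 ≤ (m2.sort (· ≤ ·)).getD j 0

/-- `x` is in the principal Borel ideal `Borel(m)`. -/
def BorelMem (m x : Multiset ℕ) : Prop := ∃ v, BorelLe v m ∧ v ≤ x

/-- In a sorted list, earlier entries are smaller. -/
lemma sorted_getD_mono {l : List ℕ} (hs : l.Pairwise (· ≤ ·)) {i j : ℕ}
    (hij : i ≤ j) (hj : j < l.length) : l.getD i 0 ≤ l.getD j 0 := by
  rw [List.getD_eq_getElem _ _ (lt_of_le_of_lt hij hj), List.getD_eq_getElem _ _ hj]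
  rcases hij.lt_or_eq with hlt | heq
  · exact List.pairwise_iff_getElem.mp hs i j _ _ hlt
  · subst heq; exact le_rfl

/-- If `l1` is a sublist of the sorted list `l2`, then entrywise `l2 ≤ l1`. -/
lemma sublist_getD_le : ∀ {l1 l2 : List ℕ}, l1.Sublist l2 → l2.Pairwise (· ≤ ·) →
    ∀ j < l1.length, l2.getD j 0 ≤ l1.getD j 0 := by
  intro l1 l2 h
  induction h with
  | slnil => intro _ j hj; simp at hj
  | cons a h ih =>
    intro hs j hj
    have hj2 : j < _ := hj.trans_le h.length_le
    have h1 : (a :: _).getD j 0 ≤ (a :: _).getD (j + 1) 0 :=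
      sorted_getD_mono hs (Nat.le_succ j) (by simpa using Nat.succ_lt_succ hj2)
    rw [List.getD_cons_succ] at h1
    exact h1.trans (ih hs.of_cons j hj)
  | cons_cons a h ih =>
    intro hs j hj
    cases j with
    | zero => simp
    | succ j =>
      rw [List.getD_cons_succ, List.getD_cons_succ]
      exact ih hs.of_cons j (Nat.lt_of_succ_lt_succ hj)

/-- If `a ≤ b` as multisets, the sorted list of `a` is a sublist of that of `b`. -/
lemma sort_sublist_sort {a b : Multiset ℕ} (hab : a ≤ b) :
    (a.sort (· ≤ ·)).Sublist (b.sort (· ≤ ·)) := by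
  have h1 : ((a.sort (· ≤ ·) : List ℕ) : Multiset ℕ) ≤ ↑(b.sort (· ≤ ·)) := by
    rw [Multiset.sort_eq, Multiset.sort_eq]; exact hab
  obtain ⟨l', hperm, hsub⟩ := Multiset.coe_le.mp h1
  have hsorted : l'.Pairwise (· ≤ ·) := (Multiset.pairwise_sort b _).sublist hsub
  have : l' = a.sort (· ≤ ·) :=
    List.Perm.eq_of_pairwise' hsorted (Multiset.pairwise_sort a _) hperm
  rwa [this] at hsub

/-- Order statistics: if `a ≤ b` then the `j`-th smallest of `b` is at most
the `j`-th smallest of `a`. -/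
lemma stat_le {a b : Multiset ℕ} (hab : a ≤ b) {j : ℕ} (hj : j < Multiset.card a) :
    (b.sort (· ≤ ·)).getD j 0 ≤ (a.sort (· ≤ ·)).getD j 0 :=
  sublist_getD_le (sort_sublist_sort hab) (Multiset.pairwise_sort b _) j
    (by rwa [Multiset.length_sort])

lemma sort_coe {l : List ℕ} (hl : l.Pairwise (· ≤ ·)) : Multiset.sort (↑l) (· ≤ ·) = l :=
  List.Perm.eq_of_pairwise' (Multiset.pairwise_sort _ _) hl
    (Multiset.coe_eq_coe.mp (Multiset.sort_eq _ _))

/-- `Borel(u) ∩ Borel(v) = Borel(w)` where `w` is the termwise minimum (the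
meet of `u` and `v` in the Borel order): `ℓ_t = min(i_t, j_t)` for `t ≤ s`
and `ℓ_t = i_t` for `s < t ≤ r`. -/
theorem borel_inter (u v : Multiset ℕ) (h : Multiset.card v ≤ Multiset.card u) :
    ∀ x : Multiset ℕ,
      (BorelMem u x ∧ BorelMem v x) ↔
        BorelMem (↑(List.zipWith min (u.sort (· ≤ ·))
          ((v.sort (· ≤ ·)) ++ (u.sort (· ≤ ·)).drop (Multiset.card v))) : Multiset ℕ) x := by
  intro x
  set su := u.sort (· ≤ ·) with hsu
  set sv := v.sort (· ≤ ·) with hsv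
  set n := Multiset.card u with hn
  set s := Multiset.card v with hs
  have hsu_len : su.length = n := Multiset.length_sort _
  have hsv_len : sv.length = s := Multiset.length_sort _
  set L := List.zipWith min su (sv ++ su.drop s) with hL
  have hL_len : L.length = n := by
    simp [hL, hsu_len, hsv_len]
    omega
  have hsu_sorted : su.Pairwise (· ≤ ·) := Multiset.pairwise_sort u _
  have hsv_sorted : sv.Pairwise (· ≤ ·) := Multiset.pairwise_sort v _
  -- entrywise description of L
  have key : ∀ i (hi : i < n),
      L.getD i 0 = if i < s then min (su.getD i 0) (sv.getD i 0) else su.getD i 0 := by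
    intro i hi
    have hi' : i < L.length := by omega
    have hisu : i < su.length := by omega
    rw [List.getD_eq_getElem _ _ hi']
    simp only [hL]
    rw [List.getElem_zipWith]
    by_cases his : i < s
    · rw [if_pos his, List.getElem_append_left (by omega : i < sv.length),
        List.getD_eq_getElem _ _ hisu, List.getD_eq_getElem _ _ (by omega : i < sv.length)]
    · rw [if_neg his, List.getElem_append_right (by omega : sv.length ≤ i), List.getElem_drop,
        List.getD_eq_getElem _ _ hisu]
      have hidx : s + (i - sv.length) = i := by omega
      simp only [hidx, min_self]
  -- L is sorted
  have hL_sorted : L.Pairwise (· ≤ ·) := by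
    rw [← List.isChain_iff_pairwise, List.isChain_iff_getElem]
    intro i hi
    have hi1 : i + 1 < n := by omega
    rw [← List.getD_eq_getElem L 0 (show i < L.length by omega),
        ← List.getD_eq_getElem L 0 (show i + 1 < L.length by omega)]
    rw [key i (by omega), key (i + 1) hi1]
    have hsu2 : su.getD i 0 ≤ su.getD (i + 1) 0 :=
      sorted_getD_mono hsu_sorted (Nat.le_succ i) (by omega)
    split_ifs with h1 h2 h2
    · have hsv2 : sv.getD i 0 ≤ sv.getD (i + 1) 0 :=
        sorted_getD_mono hsv_sorted (Nat.le_succ i) (by omega)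
      exact min_le_min hsu2 hsv2
    · exact (min_le_left _ _).trans hsu2
    · omega
    · exact hsu2
  have hsortL : Multiset.sort (↑L) (· ≤ ·) = L := sort_coe hL_sorted
  have hcardL : Multiset.card (↑L : Multiset ℕ) = n := by
    rw [Multiset.coe_card, hL_len]
  constructor
  · rintro ⟨⟨z1, hz1u, hz1x⟩, ⟨z2, hz2v, hz2x⟩⟩
    refine ⟨z1 ⊔ z2, ⟨?_, ?_⟩, sup_le hz1x hz2x⟩
    · rw [hcardL]
      exact le_trans hz1u.1 (Multiset.card_le_card le_sup_left)
    · intro j hj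
      rw [hcardL] at hj
      rw [hsortL]
      have hj1 : j < Multiset.card z1 := lt_of_lt_of_le hj hz1u.1
      have hle1 : ((z1 ⊔ z2).sort (· ≤ ·)).getD j 0 ≤ (z1.sort (· ≤ ·)).getD j 0 :=
        stat_le le_sup_left hj1
      have hleu : ((z1 ⊔ z2).sort (· ≤ ·)).getD j 0 ≤ su.getD j 0 :=
        hle1.trans (hz1u.2 j hj)
      rw [key j hj]
      split_ifs with hjs
      · have hj2 : j < Multiset.card z2 := lt_of_lt_of_le hjs hz2v.1
        have hle2 : ((z1 ⊔ z2).sort (· ≤ ·)).getD j 0 ≤ (z2.sort (· ≤ ·)).getD j 0 :=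
          stat_le le_sup_right hj2
        have hlev : ((z1 ⊔ z2).sort (· ≤ ·)).getD j 0 ≤ sv.getD j 0 :=
          hle2.trans (hz2v.2 j hjs)
        exact le_min hleu hlev
      · exact hleu
  · rintro ⟨z, ⟨hzcard, hzle⟩, hzx⟩
    rw [hcardL] at hzcard
    rw [hsortL] at hzle
    constructor
    · refine ⟨z, ⟨hzcard, ?_⟩, hzx⟩
      intro j hj
      have h1 := hzle j (by rw [hcardL]; exact hj)
      rw [key j hj] at h1
      by_cases hjs : j < s
      · rw [if_pos hjs] at h1
        exact h1.trans (min_le_left _ _)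
      · rwa [if_neg hjs] at h1
    · refine ⟨z, ⟨le_trans h hzcard, ?_⟩, hzx⟩
      intro j hj
      have hjn : j < n := lt_of_lt_of_le hj h
      have h1 := hzle j (by rw [hcardL]; exact hjn)
      rw [key j hjn] at h1
      rw [if_pos (show j < s from hj)] at h1
      exact h1.trans (min_le_right _ _)
end

section
/- For monomials u and v, the product of principal Borel ideals satisfies Borel(u)·Borel(v) = Borel(uv); that is, a monomial w lies in Borel(uv) if and only if w = w1·w2·w3 for some monomials w1 ∈ Borel(u), w2 ∈ Borel(v), and arbitrary monomial w3. -/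
namespace BorelAux

/-- count of elements `≤ s`. -/
def cnt (m : Multiset ℕ) (s : ℕ) : ℕ := Multiset.countP (fun a => a ≤ s) m

lemma sorted_getD_le_iff {L : List ℕ} (hL : L.Pairwise (· ≤ ·)) {j : ℕ} (hj : j < L.length)
    (s : ℕ) : L.getD j 0 ≤ s ↔ j < L.countP (fun a => decide (a ≤ s)) := by
  constructor
  · intro h
    have hmem : ∀ x ∈ L.take (j+1), (fun a => decide (a ≤ s)) x = true := by
      intro x hx
      obtain ⟨i, hi, rfl⟩ := List.getElem_of_mem hx
      rw [List.getElem_take]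
      have hi' : i < L.length := by
        have := hi
        simp [List.length_take] at this
        omega
      have hij : i ≤ j := by
        have := hi; simp [List.length_take] at this; omega
      have : L[i] ≤ L[j] := by
        rcases eq_or_lt_of_le hij with h' | h'
        · subst h'; exact le_rfl
        · exact hL.rel_get_of_lt (a := ⟨i, hi'⟩) (b := ⟨j, hj⟩) h'
      simp only [decide_eq_true_eq]
      rw [List.getD_eq_getElem L 0 hj] at h
      omega
    have h1 : (L.take (j+1)).countP (fun a => decide (a ≤ s)) = j + 1 := by
      rw [List.countP_eq_length.mpr hmem, List.length_take]
      omega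
    calc j < j + 1 := Nat.lt_succ_self j
      _ = (L.take (j+1)).countP (fun a => decide (a ≤ s)) := h1.symm
      _ ≤ L.countP (fun a => decide (a ≤ s)) := by
          conv_rhs => rw [← List.take_append_drop (j+1) L]
          rw [List.countP_append]; omega
  · intro h
    by_contra hc
    push_neg at hc
    have hdrop : (L.drop j).countP (fun a => decide (a ≤ s)) = 0 := by
      rw [List.countP_eq_zero]
      intro x hx
      obtain ⟨i, hi, rfl⟩ := List.getElem_of_mem hx
      rw [List.getElem_drop]
      have hji : j ≤ j + i := Nat.le_add_right _ _
      have hlen : j + i < L.length := by rw [List.length_drop] at hi; omega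
      have : L[j] ≤ L[j+i] := by
        rcases Nat.eq_or_lt_of_le hji with h' | h'
        · simp [← h']
        · exact hL.rel_get_of_lt (a := ⟨j, hj⟩) (b := ⟨j+i, hlen⟩) h'
      rw [List.getD_eq_getElem L 0 hj] at hc
      simp only [decide_eq_true_eq]
      omega
    have : L.countP (fun a => decide (a ≤ s)) ≤ j := by
      conv_lhs => rw [← List.take_append_drop j L]
      rw [List.countP_append, hdrop]
      have := List.countP_le_length (p := fun a => decide (a ≤ s)) (l := L.take j)
      simp [List.length_take] at this ⊢
      omega
    omega

lemma cnt_eq (m : Multiset ℕ) (s : ℕ) :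
    cnt m s = (m.sort (· ≤ ·)).countP (fun a => decide (a ≤ s)) := by
  conv_lhs => rw [cnt, ← Multiset.sort_eq m (· ≤ ·)]
  rw [Multiset.coe_countP]

lemma cnt_le_card (m : Multiset ℕ) (s : ℕ) : cnt m s ≤ Multiset.card m :=
  Multiset.countP_le_card _ _

lemma cnt_add (a b : Multiset ℕ) (s : ℕ) : cnt (a+b) s = cnt a s + cnt b s :=
  Multiset.countP_add _ _ _

lemma borelLe_iff {a b : Multiset ℕ} :
    BorelLe a b ↔ Multiset.card b ≤ Multiset.card a ∧ ∀ s, cnt b s ≤ cnt a s := by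
  have hsa : (a.sort (· ≤ ·)).Pairwise (· ≤ ·) := Multiset.pairwise_sort _ _
  have hsb : (b.sort (· ≤ ·)).Pairwise (· ≤ ·) := Multiset.pairwise_sort _ _
  have hla : (a.sort (· ≤ ·)).length = Multiset.card a := Multiset.length_sort _
  have hlb : (b.sort (· ≤ ·)).length = Multiset.card b := Multiset.length_sort _
  constructor
  · rintro ⟨hcard, h⟩
    refine ⟨hcard, fun s => ?_⟩
    rcases Nat.eq_zero_or_pos (cnt b s) with h0 | h0
    · omega
    set c := cnt b s with hc
    have hcb : c ≤ Multiset.card b := cnt_le_card b s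
    have hjb : c - 1 < (b.sort (· ≤ ·)).length := by omega
    have hja : c - 1 < (a.sort (· ≤ ·)).length := by omega
    have h1 : (b.sort (· ≤ ·)).getD (c-1) 0 ≤ s := by
      rw [sorted_getD_le_iff hsb hjb, ← cnt_eq]; omega
    have h2 : (a.sort (· ≤ ·)).getD (c-1) 0 ≤ s :=
      le_trans (h (c-1) (by omega)) h1
    rw [sorted_getD_le_iff hsa hja, ← cnt_eq] at h2
    omega
  · rintro ⟨hcard, h⟩
    refine ⟨hcard, fun j hj => ?_⟩
    have hjb : j < (b.sort (· ≤ ·)).length := by omega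
    have hja : j < (a.sort (· ≤ ·)).length := by omega
    set s := (b.sort (· ≤ ·)).getD j 0 with hs
    rw [sorted_getD_le_iff hsa hja, ← cnt_eq]
    have : j < cnt b s := by
      rw [cnt_eq, ← sorted_getD_le_iff hsb hjb]
    exact lt_of_lt_of_le this (h s)

lemma borelLe_add {a b u v : Multiset ℕ} (ha : BorelLe a u) (hb : BorelLe b v) :
    BorelLe (a + b) (u + v) := by
  rw [borelLe_iff] at ha hb ⊢
  simp only [Multiset.card_add, cnt_add]
  exact ⟨Nat.add_le_add ha.1 hb.1, fun s => Nat.add_le_add (ha.2 s) (hb.2 s)⟩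

lemma borelLe_split : ∀ n (u v m : Multiset ℕ), Multiset.card (u + v) = n →
    BorelLe m (u + v) → ∃ m1 m2, m1 + m2 = m ∧ BorelLe m1 u ∧ BorelLe m2 v := by
  intro n
  induction n with
  | zero =>
    intro u v m hcard hm
    have hu : u = 0 := by
      rw [Multiset.card_add] at hcard
      exact Multiset.card_eq_zero.mp (by omega)
    have hv : v = 0 := by
      rw [Multiset.card_add] at hcard
      exact Multiset.card_eq_zero.mp (by omega)
    subst hu; subst hv
    refine ⟨0, m, by simp, ?_, ?_⟩ <;>
      exact ⟨by simp, fun j hj => by simp at hj⟩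
  | succ n ih =>
    intro u v m hcard hm
    rw [borelLe_iff] at hm
    obtain ⟨hcm, hcnt⟩ := hm
    -- u + v is nonempty, pick its minimum
    have hne : u + v ≠ 0 := by
      intro h; rw [h] at hcard; simp at hcard
    obtain ⟨c, hcmem, hcmin⟩ : ∃ c ∈ u + v, ∀ y ∈ u + v, c ≤ y := by
      obtain ⟨c, hcm'⟩ := Multiset.exists_mem_of_ne_zero hne
      have hfin : (u + v).toFinset.Nonempty := ⟨c, Multiset.mem_toFinset.mpr hcm'⟩
      refine ⟨(u+v).toFinset.min' hfin, Multiset.mem_toFinset.mp (Finset.min'_mem _ _), ?_⟩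
      intro y hy
      exact Finset.min'_le _ _ (Multiset.mem_toFinset.mpr hy)
    -- pick x ∈ m with x ≤ c
    have hcntc : 1 ≤ cnt (u + v) c := by
      rw [cnt]
      rw [Nat.one_le_iff_ne_zero]
      intro h0
      rw [Multiset.countP_eq_zero] at h0
      exact h0 c hcmem le_rfl
    have hxm : ∃ x ∈ m, x ≤ c := by
      have := hcnt c
      have h1 : 1 ≤ cnt m c := le_trans hcntc this
      rw [cnt, Nat.one_le_iff_ne_zero, Ne, Multiset.countP_eq_zero] at h1
      push_neg at h1
      exact h1
    obtain ⟨x, hxmem, hxc⟩ := hxm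
    have hcons : ∀ (t : Multiset ℕ) (y : ℕ), y ∈ t → ∀ s,
        cnt t s = cnt (t.erase y) s + (if y ≤ s then 1 else 0) := by
      intro t y hy s
      rw [cnt, cnt]
      conv_lhs => rw [← Multiset.cons_erase hy]
      rw [Multiset.countP_cons]
    have key' : BorelLe (m.erase x) ((u+v).erase c) := by
      rw [borelLe_iff]
      constructor
      · rw [Multiset.card_erase_of_mem hcmem, Multiset.card_erase_of_mem hxmem,
          Nat.pred_eq_sub_one, Nat.pred_eq_sub_one]
        omega
      · intro s
        have hmx := hcons m x hxmem s
        have huvc := hcons (u+v) c hcmem s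
        have h2 := hcnt s
        by_cases hcs : c ≤ s
        · have hxs : x ≤ s := le_trans hxc hcs
          rw [if_pos hcs] at huvc; rw [if_pos hxs] at hmx; omega
        · have h0 : cnt (u+v) s = 0 := by
            rw [cnt, Multiset.countP_eq_zero]
            intro y hy hys
            exact hcs (le_trans (hcmin y hy) hys)
          rw [if_neg hcs] at huvc
          omega
    -- c is in u or in v
    rcases Multiset.mem_add.mp hcmem with hcu | hcv
    · have heq : (u+v).erase c = u.erase c + v := by
        rw [Multiset.erase_add_left_pos _ hcu]
      rw [heq] at key'
      have hupos : 1 ≤ Multiset.card u := Multiset.card_pos.mpr (by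
        intro h; rw [h] at hcu; simp at hcu)
      have hcard' : Multiset.card (u.erase c + v) = n := by
        rw [Multiset.card_add, Multiset.card_erase_of_mem hcu, Nat.pred_eq_sub_one]
        rw [Multiset.card_add] at hcard
        omega
      obtain ⟨m1', m2, hsum, h1, h2⟩ := ih (u.erase c) v (m.erase x) hcard' key'
      refine ⟨x ::ₘ m1', m2, ?_, ?_, h2⟩
      · rw [Multiset.cons_add, hsum, Multiset.cons_erase hxmem]
      · rw [borelLe_iff] at h1 ⊢
        constructor
        · rw [Multiset.card_cons]
          have := h1.1
          rw [Multiset.card_erase_of_mem hcu, Nat.pred_eq_sub_one] at this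
          omega
        · intro s
          have hle := h1.2 s
          have huc := hcons u c hcu s
          have hx1 : cnt (x ::ₘ m1') s = cnt m1' s + (if x ≤ s then 1 else 0) := by
            rw [cnt, cnt, Multiset.countP_cons]
          by_cases hcs : c ≤ s
          · have hxs : x ≤ s := le_trans hxc hcs
            rw [if_pos hcs] at huc; rw [if_pos hxs] at hx1; omega
          · rw [if_neg hcs] at huc; omega
    · have heq : (u+v).erase c = u + v.erase c := by
        rw [Multiset.erase_add_right_pos _ hcv]
      rw [heq] at key'
      have hvpos : 1 ≤ Multiset.card v := Multiset.card_pos.mpr (by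
        intro h; rw [h] at hcv; simp at hcv)
      have hcard' : Multiset.card (u + v.erase c) = n := by
        rw [Multiset.card_add, Multiset.card_erase_of_mem hcv, Nat.pred_eq_sub_one]
        rw [Multiset.card_add] at hcard
        omega
      obtain ⟨m1, m2', hsum, h1, h2⟩ := ih u (v.erase c) (m.erase x) hcard' key'
      refine ⟨m1, x ::ₘ m2', ?_, h1, ?_⟩
      · rw [Multiset.add_cons, hsum, Multiset.cons_erase hxmem]
      · rw [borelLe_iff] at h2 ⊢
        constructor
        · rw [Multiset.card_cons]
          have := h2.1
          rw [Multiset.card_erase_of_mem hcv, Nat.pred_eq_sub_one] at this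
          omega
        · intro s
          have hle := h2.2 s
          have hvc := hcons v c hcv s
          have hx1 : cnt (x ::ₘ m2') s = cnt m2' s + (if x ≤ s then 1 else 0) := by
            rw [cnt, cnt, Multiset.countP_cons]
          by_cases hcs : c ≤ s
          · have hxs : x ≤ s := le_trans hxc hcs
            rw [if_pos hcs] at hvc; rw [if_pos hxs] at hx1; omega
          · rw [if_neg hcs] at hvc; omega

end BorelAux

/-- `Borel(u)·Borel(v) = Borel(uv)`: a monomial `w` lies in `Borel(uv)` iff
`w = w1·w2·w3` with `w1 ∈ Borel(u)`, `w2 ∈ Borel(v)` and `w3` arbitrary.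
(Products of monomials correspond to sums of multisets.) -/
theorem borel_mul (u v : Multiset ℕ) :
    ∀ w : Multiset ℕ,
      BorelMem (u + v) w ↔
        ∃ w1 w2 w3 : Multiset ℕ, BorelMem u w1 ∧ BorelMem v w2 ∧ w = w1 + w2 + w3 := by
  intro w
  constructor
  · rintro ⟨m, hm, hmw⟩
    obtain ⟨m1, m2, hsum, h1, h2⟩ :=
      BorelAux.borelLe_split (Multiset.card (u+v)) u v m rfl hm
    refine ⟨m1, m2, w - m, ⟨m1, h1, le_rfl⟩, ⟨m2, h2, le_rfl⟩, ?_⟩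
    rw [hsum]; exact (add_tsub_cancel_of_le hmw).symm
  · rintro ⟨w1, w2, w3, ⟨v1, hv1, hle1⟩, ⟨v2, hv2, hle2⟩, rfl⟩
    exact ⟨v1 + v2, BorelAux.borelLe_add hv1 hv2,
      le_trans (add_le_add hle1 hle2) (Multiset.le_add_right _ _)⟩
end

section
/- For a monomial u in x_1,…,x_n, the product of the maximal ideal with the principal Borel ideal satisfies m·Borel(u) = Borel(u·x_n), where m = (x_1,…,x_n). That is, a monomial w lies in Borel(u·x_n) if and only if w = x_i · w' for some i and some w' ∈ Borel(u). -/
lemma sort_coe_of_sorted (l : List ℕ) (h : l.Pairwise (· ≤ ·)) :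
    (l : Multiset ℕ).sort (· ≤ ·) = l :=
  List.Perm.eq_of_pairwise' (Multiset.pairwise_sort _ _) h
    (Multiset.coe_eq_coe.mp (Multiset.sort_eq _ _))

lemma coe_sort_cons (a : ℕ) (s : Multiset ℕ) :
    (((a ::ₘ s).sort (· ≤ ·) : List ℕ) : Multiset ℕ) = ↑(a :: s.sort (· ≤ ·)) := by
  rw [Multiset.sort_eq, ← Multiset.cons_coe, Multiset.sort_eq]

lemma sort_cons_oi (a : ℕ) (s : Multiset ℕ) :
    (a ::ₘ s).sort (· ≤ ·) = List.orderedInsert (· ≤ ·) a (s.sort (· ≤ ·)) := by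
  have hp : ((a ::ₘ s).sort (· ≤ ·)).Perm (List.orderedInsert (· ≤ ·) a (s.sort (· ≤ ·))) :=
    (Multiset.coe_eq_coe.mp (coe_sort_cons a s)).trans (List.perm_orderedInsert _ _ _).symm
  exact List.Perm.eq_of_pairwise' (Multiset.pairwise_sort _ _)
    ((Multiset.pairwise_sort _ _).orderedInsert a _) hp

lemma sort_cons_max (a : ℕ) (s : Multiset ℕ) (h : ∀ x ∈ s, x ≤ a) :
    (a ::ₘ s).sort (· ≤ ·) = s.sort (· ≤ ·) ++ [a] := by
  have hp : ((a ::ₘ s).sort (· ≤ ·)).Perm (s.sort (· ≤ ·) ++ [a]) :=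
    (Multiset.coe_eq_coe.mp (coe_sort_cons a s)).trans (List.perm_append_singleton _ _).symm
  refine List.Perm.eq_of_pairwise' (Multiset.pairwise_sort _ _) ?_ hp
  refine List.pairwise_append.mpr ⟨Multiset.pairwise_sort _ _, List.pairwise_singleton _ a,
    fun x hx b hb => ?_⟩
  rw [List.mem_singleton] at hb
  subst hb
  exact h x ((Multiset.mem_sort _).mp hx)

lemma sorted_getD_mono_s7 {l : List ℕ} (hl : l.Pairwise (· ≤ ·)) {j k : ℕ}
    (hjk : j ≤ k) (hk : k < l.length) : l.getD j 0 ≤ l.getD k 0 := by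
  rw [List.getD_eq_getElem _ _ (lt_of_le_of_lt hjk hk), List.getD_eq_getElem _ _ hk]
  rcases eq_or_lt_of_le hjk with rfl | hlt
  · exact le_refl _
  · exact List.Pairwise.rel_get_of_lt hl (a := ⟨j, _⟩) (b := ⟨k, hk⟩) hlt

lemma oi_getD_le (i : ℕ) : ∀ l : List ℕ, l.Pairwise (· ≤ ·) → ∀ j < l.length,
    (List.orderedInsert (· ≤ ·) i l).getD j 0 ≤ l.getD j 0
  | [], _, j, hj => by simp at hj
  | b :: l, hl, j, hj => by
    rw [List.orderedInsert]
    split_ifs with h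
    · cases j with
      | zero => simpa using h
      | succ j =>
        simp only [List.getD_cons_succ]
        exact sorted_getD_mono_s7 hl (Nat.le_succ j) hj
    · cases j with
      | zero => simp
      | succ j =>
        simp only [List.getD_cons_succ]
        exact oi_getD_le i l (List.pairwise_cons.mp hl).2 j (by simpa using hj)

/-- `m·Borel(u) = Borel(u·x_n)` where `m = (x_1,…,x_n)`: a monomial `w` (in
`x_1,…,x_n`) lies in `Borel(u·x_n)` iff `w = x_i·w'` for some `1 ≤ i ≤ n`
and some `w' ∈ Borel(u)`. -/
theorem maximal_ideal_mul_borel (n : ℕ) (hn : 1 ≤ n) (u : Multiset ℕ)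
    (hu : ∀ x ∈ u, 1 ≤ x ∧ x ≤ n) (w : Multiset ℕ) (hw : ∀ x ∈ w, 1 ≤ x ∧ x ≤ n) :
    BorelMem (n ::ₘ u) w ↔
      ∃ i : ℕ, 1 ≤ i ∧ i ≤ n ∧ ∃ w' : Multiset ℕ, BorelMem u w' ∧ w = i ::ₘ w' := by
  have hsortu : (n ::ₘ u).sort (· ≤ ·) = u.sort (· ≤ ·) ++ [n] :=
    sort_cons_max n u (fun x hx => (hu x hx).2)
  constructor
  · rintro ⟨v, ⟨hcard, hle⟩, hvw⟩
    rw [Multiset.card_cons] at hcard hle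
    set l := v.sort (· ≤ ·) with hldef
    have hlen : l.length = Multiset.card v := Multiset.length_sort _
    have hne : l ≠ [] := by
      intro hc
      rw [hc] at hlen
      simp at hlen
      omega
    set i := l.getLast hne with hidef
    have hiv : i ∈ v := (Multiset.mem_sort _).mp (List.getLast_mem hne)
    have hiw : i ∈ w := Multiset.mem_of_le hvw hiv
    have hdl : l.dropLast ++ [i] = l := List.dropLast_append_getLast hne
    have hdls : l.dropLast.Pairwise (· ≤ ·) :=
      (Multiset.pairwise_sort _ _).sublist (List.dropLast_sublist l)
    have hsortdl : ((l.dropLast : Multiset ℕ)).sort (· ≤ ·) = l.dropLast :=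
      sort_coe_of_sorted _ hdls
    have hlendl : l.dropLast.length = l.length - 1 := List.length_dropLast
    have hv : (i ::ₘ (l.dropLast : Multiset ℕ)) = v := by
      calc i ::ₘ (l.dropLast : Multiset ℕ) = ((i :: l.dropLast : List ℕ) : Multiset ℕ) :=
            Multiset.cons_coe i _
        _ = ((l : List ℕ) : Multiset ℕ) := Multiset.coe_eq_coe.mpr
            ((List.perm_append_singleton i l.dropLast).symm.trans (by rw [hdl]))
        _ = v := Multiset.sort_eq _ _
    refine ⟨i, (hw i hiw).1, (hw i hiw).2, w.erase i,
      ⟨(l.dropLast : Multiset ℕ), ⟨?_, ?_⟩, ?_⟩, (Multiset.cons_erase hiw).symm⟩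
    · rw [Multiset.coe_card]
      omega
    · intro j hj
      rw [hsortdl]
      have hj1 : j < l.dropLast.length := by omega
      have hj2 : j < l.length := by omega
      have h1 : l.dropLast.getD j 0 = l.getD j 0 := by
        rw [List.getD_eq_getElem _ _ hj1, List.getD_eq_getElem _ _ hj2]
        exact List.getElem_dropLast hj1
      rw [h1]
      have h2 := hle j (by omega)
      rw [hsortu] at h2
      have h3 : ((u.sort (· ≤ ·)) ++ [n]).getD j 0 = (u.sort (· ≤ ·)).getD j 0 :=
        List.getD_append _ _ _ _ (by rw [Multiset.length_sort]; exact hj)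
      rw [h3] at h2
      exact h2
    · have := Multiset.erase_le_erase i (hv ▸ hvw)
      rwa [Multiset.erase_cons_head] at this
  · rintro ⟨i, hi1, hin, w', ⟨v, ⟨hcard, hle⟩, hvw'⟩, rfl⟩
    refine ⟨i ::ₘ v, ⟨?_, ?_⟩, Multiset.cons_le_cons i hvw'⟩
    · simp only [Multiset.card_cons]
      omega
    · intro j hj
      rw [Multiset.card_cons] at hj
      rw [hsortu, sort_cons_oi]
      have hvn : ∀ x ∈ v, x ≤ n := fun x hx =>
        (hw x (Multiset.mem_cons_of_mem (Multiset.mem_of_le hvw' hx))).2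
      rcases Nat.lt_succ_iff_lt_or_eq.mp hj with hlt | heq
      · have hju2 : j < (u.sort (· ≤ ·)).length := by
          rw [Multiset.length_sort]; exact hlt
        have h3 : ((u.sort (· ≤ ·)) ++ [n]).getD j 0 = (u.sort (· ≤ ·)).getD j 0 :=
          List.getD_append _ _ _ _ hju2
        rw [h3]
        have hjv : j < (v.sort (· ≤ ·)).length := by
          rw [Multiset.length_sort]; omega
        exact le_trans (oi_getD_le i _ (Multiset.pairwise_sort _ _) j hjv) (hle j hlt)
      · have hlen2 : j < (List.orderedInsert (· ≤ ·) i (v.sort (· ≤ ·))).length := by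
          rw [List.orderedInsert_length, Multiset.length_sort]
          omega
        have hmem : (List.orderedInsert (· ≤ ·) i (v.sort (· ≤ ·))).getD j 0 ≤ n := by
          rw [List.getD_eq_getElem _ _ hlen2]
          have := List.getElem_mem hlen2
          rcases (List.mem_orderedInsert _).mp this with h | h
          · omega
          · exact hvn _ ((Multiset.mem_sort _).mp h)
        have h4 : ((u.sort (· ≤ ·)) ++ [n]).getD j 0 = n := by
          have hju : j = (u.sort (· ≤ ·)).length := by rw [Multiset.length_sort]; omega
          rw [List.getD_append_right _ _ _ _ (le_of_eq hju.symm), hju]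
          simp
        rw [h4]
        exact hmem
end

section
/- Let m = x_{i_1}⋯x_{i_r} be a monomial in weakly increasing factorization and let 1 ≤ j ≤ n. If there exists t with i_t ≥ j, let s be minimal such; then the colon (Borel(m) : x_j) equals Borel(m / x_{i_s}). If j > i_r, then (Borel(m) : x_j) = Borel(m). -/
/-- countP characterization of sorted list entries. -/
lemma sorted_getD_le_iff {l : List ℕ} (hl : l.Pairwise (· ≤ ·)) {t : ℕ} (ht : t < l.length)
    (z : ℕ) : l.getD t 0 ≤ z ↔ t < l.countP (fun x => x ≤ z) := by
  induction l generalizing t with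
  | nil => simp at ht
  | cons a l ih =>
    rw [List.pairwise_cons] at hl
    cases t with
    | zero =>
      simp only [List.getD_cons_zero, List.countP_cons]
      constructor
      · intro h
        have : (decide (a ≤ z)) = true := by simpa using h
        simp [this]
      · intro h
        by_contra hza
        push_neg at hza
        have h0 : l.countP (fun x => x ≤ z) = 0 := by
          rw [List.countP_eq_zero]
          intro x hx
          simp only [decide_eq_true_eq]
          exact fun hxz => absurd (le_trans (hl.1 x hx) hxz) (not_le.mpr hza)
        rw [h0, if_neg (by simpa using not_le.mpr hza)] at h
        simp at h
    | succ t =>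
      simp only [List.getD_cons_succ, List.countP_cons, List.length_cons] at *
      by_cases haz : a ≤ z
      · rw [ih hl.2 (Nat.lt_of_succ_lt_succ ht)]
        simp [haz]
      · have h0 : l.countP (fun x => x ≤ z) = 0 := by
          rw [List.countP_eq_zero]
          intro x hx
          simp only [decide_eq_true_eq]
          exact fun hxz => haz (le_trans (hl.1 x hx) hxz)
        have ht' : t < l.length := Nat.lt_of_succ_lt_succ ht
        have hmem : l.getD t 0 ∈ l := by
          rw [List.getD_eq_getElem l 0 ht']
          exact List.getElem_mem ht'
        have hgt : z < l.getD t 0 := lt_of_lt_of_le (not_le.mp haz) (hl.1 _ hmem)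
        rw [h0, if_neg (by simpa using haz)]
        omega

lemma countP_sort (m : Multiset ℕ) (z : ℕ) :
    (m.sort (· ≤ ·)).countP (fun x => x ≤ z) = Multiset.countP (fun x => x ≤ z) m := by
  conv_rhs => rw [← Multiset.sort_eq m (· ≤ ·)]
  rfl

/-- Counting characterization of the Borel order. -/
lemma borelLe_iff (v m : Multiset ℕ) :
    BorelLe v m ↔ Multiset.card m ≤ Multiset.card v ∧
      ∀ z, Multiset.countP (fun x => x ≤ z) m ≤ Multiset.countP (fun x => x ≤ z) v := by
  have lv : (v.sort (· ≤ ·)).length = Multiset.card v := Multiset.length_sort _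
  have lm : (m.sort (· ≤ ·)).length = Multiset.card m := Multiset.length_sort _
  have sv : (v.sort (· ≤ ·)).Pairwise (· ≤ ·) := Multiset.pairwise_sort _ _
  have sm : (m.sort (· ≤ ·)).Pairwise (· ≤ ·) := Multiset.pairwise_sort _ _
  constructor
  · rintro ⟨hc, h⟩
    refine ⟨hc, fun z => ?_⟩
    set k := Multiset.countP (fun x => x ≤ z) m with hk
    rcases Nat.eq_zero_or_pos k with h0 | h0
    · omega
    have hkm : k ≤ Multiset.card m := by
      rw [hk, Multiset.countP_eq_card_filter]
      exact Multiset.card_le_card (Multiset.filter_le _ _)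
    have h1 : (m.sort (· ≤ ·)).getD (k - 1) 0 ≤ z := by
      rw [sorted_getD_le_iff sm (by omega), countP_sort]
      omega
    have h2 : (v.sort (· ≤ ·)).getD (k - 1) 0 ≤ z :=
      le_trans (h (k - 1) (by omega)) h1
    rw [sorted_getD_le_iff sv (by omega), countP_sort] at h2
    omega
  · rintro ⟨hc, h⟩
    refine ⟨hc, fun t ht => ?_⟩
    set z := (m.sort (· ≤ ·)).getD t 0 with hz
    have h1 : t < (m.sort (· ≤ ·)).countP (fun x => x ≤ z) := by
      rw [← sorted_getD_le_iff sm (by omega)]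
    have h2 : t < (v.sort (· ≤ ·)).countP (fun x => x ≤ z) := by
      rw [countP_sort] at h1 ⊢
      exact lt_of_lt_of_le h1 (h z)
    rw [← sorted_getD_le_iff sv (by omega)] at h2
    exact h2

lemma countP_le_of_imp (u : Multiset ℕ) (p q : ℕ → Prop) [DecidablePred p] [DecidablePred q]
    (h : ∀ x ∈ u, p x → q x) : Multiset.countP p u ≤ Multiset.countP q u := by
  induction u using Multiset.induction with
  | empty => simp
  | cons a s ih =>
    rw [Multiset.countP_cons, Multiset.countP_cons]
    have ha := h a (Multiset.mem_cons_self a s)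
    have ihs := ih (fun x hx => h x (Multiset.mem_cons_of_mem hx))
    by_cases hp : p a
    · rw [if_pos hp, if_pos (ha hp)]; omega
    · rw [if_neg hp]; split_ifs <;> omega

lemma countP_erase (u : Multiset ℕ) (a : ℕ) (h : a ∈ u) (p : ℕ → Prop) [DecidablePred p] :
    Multiset.countP p u = Multiset.countP p (u.erase a) + (if p a then 1 else 0) := by
  conv_lhs => rw [← Multiset.cons_erase h]
  rw [Multiset.countP_cons]

/-- Colon of a principal Borel ideal by a variable.  If `c = x_{i_s}` is the
smallest variable of `m` with index `≥ j`, then `(Borel(m) : x_j) =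
Borel(m / x_{i_s})`; if every variable of `m` has index `< j`, then
`(Borel(m) : x_j) = Borel(m)`. -/
theorem borel_colon (m : Multiset ℕ) (j : ℕ) (hm : ∀ x ∈ m, 1 ≤ x) (hj : 1 ≤ j) :
    (∀ c ∈ m, j ≤ c → (∀ t ∈ m, j ≤ t → c ≤ t) →
      {w : Multiset ℕ | BorelMem m (j ::ₘ w)} = {w : Multiset ℕ | BorelMem (m.erase c) w}) ∧
    ((∀ t ∈ m, t < j) →
      {w : Multiset ℕ | BorelMem m (j ::ₘ w)} = {w : Multiset ℕ | BorelMem m w}) := by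
  constructor
  · intro c hc hjc hmin
    ext w
    simp only [Set.mem_setOf_eq]
    constructor
    · rintro ⟨v, hv, hvle⟩
      rw [borelLe_iff] at hv
      obtain ⟨hvc, hvcnt⟩ := hv
      by_cases hjv : j ∈ v
      · refine ⟨v.erase j, ?_, ?_⟩
        · rw [borelLe_iff]
          have hcard : Multiset.card (v.erase j) = Multiset.card v - 1 :=
            Multiset.card_erase_of_mem hjv
          have hcardm : Multiset.card (m.erase c) = Multiset.card m - 1 :=
            Multiset.card_erase_of_mem hc
          refine ⟨by omega, fun z => ?_⟩
          have hme := countP_erase m c hc (fun x => x ≤ z)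
          have hve := countP_erase v j hjv (fun x => x ≤ z)
          have hmv := hvcnt z
          by_cases hcz : c ≤ z
          · rw [if_pos hcz] at hme
            rw [if_pos (le_trans hjc hcz)] at hve
            omega
          · by_cases hjz : j ≤ z
            · -- j ≤ z < c
              rw [if_neg hcz] at hme
              rw [if_pos hjz] at hve
              have h1 : Multiset.countP (fun x => x ≤ z) m ≤
                  Multiset.countP (fun x => x ≤ j - 1) m := by
                apply countP_le_of_imp
                intro x hx hxz
                by_contra hx'
                have : j ≤ x := by omega
                exact absurd (le_trans (hmin x hx this) hxz) hcz
              have h2 := hvcnt (j - 1)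
              have h3 := countP_erase v j hjv (fun x => x ≤ j - 1)
              rw [if_neg (by omega)] at h3
              have h4 : Multiset.countP (fun x => x ≤ j - 1) (v.erase j) ≤
                  Multiset.countP (fun x => x ≤ z) (v.erase j) :=
                countP_le_of_imp _ _ _ (fun x _ hx => by omega)
              omega
            · rw [if_neg hcz] at hme
              rw [if_neg hjz] at hve
              omega
        · have := Multiset.erase_le_erase j hvle
          rwa [Multiset.erase_cons_head] at this
      · refine ⟨v, ?_, (Multiset.le_cons_of_notMem hjv).mp hvle⟩
        rw [borelLe_iff]
        have hcardm : Multiset.card (m.erase c) = Multiset.card m - 1 :=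
          Multiset.card_erase_of_mem hc
        refine ⟨by omega, fun z => ?_⟩
        have hme := countP_erase m c hc (fun x => x ≤ z)
        have hmv := hvcnt z
        split_ifs at hme <;> omega
    · rintro ⟨v, hv, hvle⟩
      rw [borelLe_iff] at hv
      obtain ⟨hvc, hvcnt⟩ := hv
      refine ⟨j ::ₘ v, ?_, Multiset.cons_le_cons j hvle⟩
      rw [borelLe_iff]
      have hcardm : Multiset.card (m.erase c) = Multiset.card m - 1 :=
        Multiset.card_erase_of_mem hc
      have hcm : 0 < Multiset.card m := Multiset.card_pos_iff_exists_mem.mpr ⟨c, hc⟩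
      refine ⟨by rw [Multiset.card_cons]; omega, fun z => ?_⟩
      have hme := countP_erase m c hc (fun x => x ≤ z)
      have hvc2 := Multiset.countP_cons (fun x => x ≤ z) j v
      have hmv := hvcnt z
      by_cases hcz : c ≤ z
      · rw [if_pos hcz] at hme
        rw [if_pos (le_trans hjc hcz)] at hvc2
        omega
      · rw [if_neg hcz] at hme
        split_ifs at hvc2 <;> omega
  · intro hall
    ext w
    simp only [Set.mem_setOf_eq]
    constructor
    · rintro ⟨v, hv, hvle⟩
      rw [borelLe_iff] at hv
      obtain ⟨hvc, hvcnt⟩ := hv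
      by_cases hjv : j ∈ v
      · refine ⟨v.erase j, ?_, ?_⟩
        · rw [borelLe_iff]
          have hcard : Multiset.card (v.erase j) = Multiset.card v - 1 :=
            Multiset.card_erase_of_mem hjv
          have hmfull : Multiset.countP (fun x => x ≤ j - 1) m = Multiset.card m :=
            Multiset.countP_eq_card.mpr (fun a ha => by have := hall a ha; omega)
          have h2 := hvcnt (j - 1)
          have h3 := countP_erase v j hjv (fun x => x ≤ j - 1)
          rw [if_neg (by omega)] at h3
          have h5 : Multiset.countP (fun x => x ≤ j - 1) (v.erase j) ≤
              Multiset.card (v.erase j) := Multiset.countP_le_card _ _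
          refine ⟨by omega, fun z => ?_⟩
          have hve := countP_erase v j hjv (fun x => x ≤ z)
          have hmv := hvcnt z
          by_cases hjz : j ≤ z
          · rw [if_pos hjz] at hve
            have hmz : Multiset.countP (fun x => x ≤ z) m = Multiset.card m :=
              Multiset.countP_eq_card.mpr (fun a ha => by have := hall a ha; omega)
            have h4 : Multiset.countP (fun x => x ≤ j - 1) (v.erase j) ≤
                Multiset.countP (fun x => x ≤ z) (v.erase j) :=
              countP_le_of_imp _ _ _ (fun x _ hx => by omega)
            omega
          · rw [if_neg hjz] at hve
            omega
        · have := Multiset.erase_le_erase j hvle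
          rwa [Multiset.erase_cons_head] at this
      · exact ⟨v, borelLe_iff v m |>.mpr ⟨hvc, hvcnt⟩, (Multiset.le_cons_of_notMem hjv).mp hvle⟩
    · rintro ⟨v, hv, hvle⟩
      exact ⟨v, hv, le_trans hvle (Multiset.le_cons_self w j)⟩
end

section
/- Define b_i(n) = Σ_{j=1}^{n} binom(j−1, i)·w_j(n), where w_j(n) is the number of weakly increasing sequences (a_1,…,a_n) with a_t ≤ t for all t and a_n = j. Then for all n ≥ 1 and all i, b_{i−1}(n) + b_i(n−1) = binom(n, i)·C_{n−1}, where C_{n−1} is the (n−1)-st Catalan number. -/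
/-- Minimal generators of `Borel(x_1 x_2 ⋯ x_n)`: weakly increasing sequences
`(a_1,…,a_n)` of positive integers with `a_t ≤ t` for all `t`. -/
def borelGens (n : ℕ) : Set (List ℕ) :=
  {l | l.length = n ∧ l.Chain' (· ≤ ·) ∧
    ∀ t < l.length, 1 ≤ l.getD t 0 ∧ l.getD t 0 ≤ t + 1}

/-- `w n j`: the number of such sequences with `a_n = j`. -/
noncomputable def w (n j : ℕ) : ℕ :=
  Set.ncard {l ∈ borelGens n | l.getLast? = some j}

/-- `b n i = Σ_{j=1}^n binom(j-1,i)·w_j(n)`, the `i`-th total Betti number of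
`Borel(x_1⋯x_n)` via the Eliahou–Kervaire formula. -/
noncomputable def b (n i : ℕ) : ℕ :=
  ∑ j ∈ Finset.Icc 1 n, Nat.choose (j - 1) i * w n j

namespace BorelAux


def S (n j : ℕ) : Set (List ℕ) := {l ∈ borelGens n | l.getLast? = some j}

lemma w_def (n j : ℕ) : w n j = (S n j).ncard := rfl

lemma getD_append_left' (l l₂ : List ℕ) (t : ℕ) (h : t < l.length) :
    (l ++ l₂).getD t 0 = l.getD t 0 := by
  rw [List.getD_eq_getElem?_getD, List.getD_eq_getElem?_getD, List.getElem?_append_left h]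

lemma getD_concat_length (l : List ℕ) (j : ℕ) : (l ++ [j]).getD l.length 0 = j := by
  simp [List.getD]

lemma borelGens_finite (n : ℕ) : (borelGens n).Finite := by
  have h : borelGens n ⊆
      (List.map (Fin.val : Fin (n + 1) → ℕ)) '' {l : List (Fin (n + 1)) | l.length = n} := by
    rintro l ⟨hlen, -, hb⟩
    have hx : ∀ x ∈ l, x < n + 1 := by
      intro x hx
      obtain ⟨t, ht, rfl⟩ := List.mem_iff_getElem.mp hx
      have h2 := (hb t (by omega)).2
      rw [List.getD_eq_getElem l 0 ht] at h2
      omega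
    refine ⟨l.map (fun x => (⟨x % (n + 1), Nat.mod_lt _ (by omega)⟩ : Fin (n + 1))),
      by simp [hlen], ?_⟩
    rw [List.map_map]
    conv_rhs => rw [← List.map_id l]
    refine List.map_congr_left fun x hxl => ?_
    simp [Nat.mod_eq_of_lt (hx x hxl)]
  exact ((List.finite_length_eq (Fin (n + 1)) n).image _).subset h

lemma S_finite (n j : ℕ) : (S n j).Finite :=
  (borelGens_finite n).subset fun l hl => hl.1

lemma last_bounds {n j : ℕ} {l : List ℕ} (hl : l ∈ borelGens n) (hj : l.getLast? = some j) :
    1 ≤ j ∧ j ≤ n := by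
  obtain ⟨hlen, -, hb⟩ := hl
  have hdec : l.dropLast ++ [j] = l := List.dropLast_append_getLast? j hj
  have hne : l ≠ [] := by rintro rfl; simp at hj
  have hlen' : l.dropLast.length = n - 1 := by simp [hlen]
  have hn : 1 ≤ n := by
    have := List.length_pos_iff.mpr hne; omega
  have hb2 := hb (n - 1) (by omega)
  rw [← hdec, ← hlen', getD_concat_length] at hb2
  omega

lemma S_empty {n j : ℕ} (h : j = 0 ∨ n < j) : S n j = ∅ := by
  ext l
  simp only [S, Set.mem_setOf_eq, Set.mem_empty_iff_false, iff_false, not_and]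
  intro hl hj
  have := last_bounds hl hj
  omega

lemma S_one : S 1 1 = {[1]} := by
  ext l
  simp only [S, Set.mem_setOf_eq, Set.mem_singleton_iff]
  constructor
  · rintro ⟨⟨hlen, -, hb⟩, hlast⟩
    obtain ⟨a, rfl⟩ := List.length_eq_one_iff.mp hlen
    simp at hlast; simp [hlast]
  · rintro rfl
    refine ⟨⟨rfl, List.isChain_singleton 1, ?_⟩, rfl⟩
    intro t ht
    simp only [List.length_singleton] at ht
    interval_cases t <;> simp [List.getD]

lemma S_succ (n j : ℕ) (hn : 1 ≤ n) (hj1 : 1 ≤ j) (hj2 : j ≤ n + 1) :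
    S (n + 1) j = ⋃ k ∈ Finset.Icc 1 (min j n), (fun l => l ++ [j]) '' S n k := by
  ext l
  simp only [Set.mem_iUnion, Finset.mem_Icc, Set.mem_image, exists_prop]
  constructor
  · rintro ⟨⟨hlen, hc, hb⟩, hlast⟩
    have hdec : l.dropLast ++ [j] = l := List.dropLast_append_getLast? j hlast
    set l' := l.dropLast with hl'
    have hlen' : l'.length = n := by simp [hl', hlen]
    have hne : l' ≠ [] := by rw [← List.length_pos_iff]; omega
    have hk' := List.getLast?_eq_getLast_of_ne_nil hne
    set k := l'.getLast hne with hkdef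
    rw [← hdec] at hc; unfold List.Chain' at hc; rw [List.isChain_append] at hc
    have hkj : k ≤ j := by
      refine hc.2.2 k ?_ j (by simp)
      rw [hk']; rfl
    have hb' : ∀ t < l'.length, 1 ≤ l'.getD t 0 ∧ l'.getD t 0 ≤ t + 1 := by
      intro t ht
      have h2 := hb t (by omega)
      rw [← hdec, getD_append_left' _ _ _ ht] at h2
      exact h2
    have hmem : l' ∈ borelGens n := ⟨hlen', hc.1, hb'⟩
    have hkb := last_bounds hmem hk'
    exact ⟨k, ⟨hkb.1, le_min hkj hkb.2⟩, l', ⟨hmem, hk'⟩, hdec⟩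
  · rintro ⟨k, ⟨hk1, hk2⟩, l', ⟨⟨hlen', hc', hb'⟩, hk⟩, rfl⟩
    have hkj : k ≤ j := le_trans hk2 (min_le_left _ _)
    refine ⟨⟨by simp [hlen'], ?_, ?_⟩, by simp⟩
    · unfold List.Chain'; rw [List.isChain_append]
      refine ⟨hc', List.isChain_singleton j, ?_⟩
      intro x hx y hy
      rw [hk] at hx
      simp at hx hy
      omega
    · intro t ht
      simp only [List.length_append, List.length_singleton, hlen'] at ht
      by_cases htn : t < n
      · rw [getD_append_left' _ _ _ (by omega : t < l'.length)]
        exact hb' t (by omega)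
      · have htn' : t = n := by omega
        subst htn'
        rw [← hlen', getD_concat_length]
        omega



lemma ncard_biUnion {α : Type*} (s : Finset ℕ) (F : ℕ → Set α)
    (hfin : ∀ i ∈ s, (F i).Finite)
    (hdisj : ∀ i ∈ s, ∀ j ∈ s, i ≠ j → Disjoint (F i) (F j)) :
    (⋃ i ∈ s, F i).ncard = ∑ i ∈ s, (F i).ncard := by
  classical
  induction s using Finset.induction with
  | empty => simp
  | @insert a s ha ih =>
    rw [Finset.set_biUnion_insert, Finset.sum_insert ha,
      Set.ncard_union_eq ?_ (hfin a (Finset.mem_insert_self a s)) ?_,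
      ih (fun i hi => hfin i (Finset.mem_insert_of_mem hi))
        (fun i hi j hj hij => hdisj i (Finset.mem_insert_of_mem hi) j
          (Finset.mem_insert_of_mem hj) hij)]
    · rw [Set.disjoint_iUnion_right]
      intro i
      rw [Set.disjoint_iUnion_right]
      intro hi
      exact hdisj a (Finset.mem_insert_self a s) i (Finset.mem_insert_of_mem hi)
        (by rintro rfl; exact ha hi)
    · exact Set.Finite.biUnion (Finset.finite_toSet s)
        (fun i hi => hfin i (Finset.mem_insert_of_mem hi))

lemma w_eq_zero {n j : ℕ} (h : j = 0 ∨ n < j) : w n j = 0 := by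
  rw [w_def, S_empty h, Set.ncard_empty]

lemma w_one : w 1 1 = 1 := by rw [w_def, S_one, Set.ncard_singleton]

lemma w_succ (n j : ℕ) (hn : 1 ≤ n) (hj1 : 1 ≤ j) (hj2 : j ≤ n + 1) :
    w (n + 1) j = ∑ k ∈ Finset.Icc 1 (min j n), w n k := by
  rw [w_def, S_succ n j hn hj1 hj2, ncard_biUnion]
  · refine Finset.sum_congr rfl fun k _ => ?_
    rw [Set.ncard_image_of_injective _ (List.append_left_injective [j]), w_def]
  · exact fun k _ => (S_finite n k).image _
  · intro k _ k' _ hkk'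
    rw [Set.disjoint_left]
    rintro x ⟨l1, hl1, rfl⟩ ⟨l2, hl2, heq⟩
    have : l2 = l1 := List.append_left_injective [j] heq
    subst this
    exact hkk' (by rw [← Option.some_inj, ← hl1.2, ← hl2.2])




def B (n : ℕ) : ℕ → ℕ
  | 0 => 0
  | 1 => 1
  | (j + 2) => Nat.choose (n + j) (j + 1) - Nat.choose (n + j) j

lemma choose_mono_step {m k : ℕ} (h : k + 1 ≤ m - k) :
    Nat.choose m k ≤ Nat.choose m (k + 1) := by
  have h1 := Nat.choose_succ_right_eq m k
  have h2 : Nat.choose m k * (k + 1) ≤ Nat.choose m k * (m - k) :=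
    Nat.mul_le_mul_left _ h
  rw [← h1] at h2
  exact Nat.le_of_mul_le_mul_right h2 (by omega)

-- B (n+1) (j+1) = B (n+1) j + B n (j+1) for 1 ≤ j, j + 1 ≤ n
lemma B_pascal {n j : ℕ} (hj : 1 ≤ j) (hjn : j + 1 ≤ n) :
    B (n + 1) (j + 1) = B (n + 1) j + B n (j + 1) := by
  match j, hj with
  | 1, _ =>
    show B (n+1) 2 = B (n+1) 1 + B n 2
    simp only [B]
    have : Nat.choose (n + 1 + 0) 1 = n + 1 := by simp
    have h2 : Nat.choose (n + 0) 1 = n := by simp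
    simp only [Nat.add_zero] at *
    rw [Nat.choose_one_right, Nat.choose_one_right]
    simp [Nat.choose_zero_right]
    omega
  | (s + 2), _ =>
    show B (n+1) (s+3) = B (n+1) (s+2) + B n (s+3)
    simp only [B]
    -- identities
    have p1 : Nat.choose (n + s + 2) (s + 2) = Nat.choose (n + s + 1) (s + 1) + Nat.choose (n + s + 1) (s + 2) := by
      rw [Nat.choose_succ_succ (n + s + 1) (s + 1)]
    have p2 : Nat.choose (n + s + 2) (s + 1) = Nat.choose (n + s + 1) s + Nat.choose (n + s + 1) (s + 1) := by
      rw [Nat.choose_succ_succ (n + s + 1) s]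
    show Nat.choose (n+1+(s+1)) (s+2) - Nat.choose (n+1+(s+1)) (s+1) =
      (Nat.choose (n+1+s) (s+1) - Nat.choose (n+1+s) s) +
      (Nat.choose (n+(s+1)) (s+2) - Nat.choose (n+(s+1)) (s+1))
    rw [show n+1+(s+1) = n+s+2 by ring, show n+1+s = n+s+1 by ring, show n+(s+1) = n+s+1 by ring]
    have m1 : Nat.choose (n + s + 1) s ≤ Nat.choose (n + s + 1) (s + 1) :=
      choose_mono_step (by omega)
    have m2 : Nat.choose (n + s + 1) (s + 1) ≤ Nat.choose (n + s + 1) (s + 2) :=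
      choose_mono_step (by omega)
    omega

-- diagonal: B (n+1) (n+1) = B (n+1) n for n ≥ 1
lemma B_diag {n : ℕ} (hn : 1 ≤ n) : B (n + 1) (n + 1) = B (n + 1) n := by
  match n, hn with
  | 1, _ => decide
  | (s + 2), _ =>
    show B (s + 3) (s + 3) = B (s + 3) (s + 2)
    simp only [B]
    show Nat.choose (s+3+(s+1)) (s+2) - Nat.choose (s+3+(s+1)) (s+1) =
      Nat.choose (s+3+s) (s+1) - Nat.choose (s+3+s) s
    rw [show s+3+(s+1) = 2*s+4 by ring, show s+3+s = 2*s+3 by ring]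
    have p1 : Nat.choose (2 * s + 4) (s + 2) = Nat.choose (2 * s + 3) (s + 1) + Nat.choose (2 * s + 3) (s + 2) := by
      rw [Nat.choose_succ_succ (2 * s + 3) (s + 1)]
    have p2 : Nat.choose (2 * s + 4) (s + 1) = Nat.choose (2 * s + 3) s + Nat.choose (2 * s + 3) (s + 1) := by
      rw [Nat.choose_succ_succ (2 * s + 3) s]
    have sym : Nat.choose (2 * s + 3) (s + 2) = Nat.choose (2 * s + 3) (s + 1) := by
      have := Nat.choose_symm (by omega : s + 2 ≤ 2 * s + 3)
      rw [show 2 * s + 3 - (s + 2) = s + 1 by omega] at this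
      omega
    have m1 : Nat.choose (2 * s + 3) s ≤ Nat.choose (2 * s + 3) (s + 1) :=
      choose_mono_step (by omega)
    omega

-- partial sums: for 1 ≤ j ≤ n : ∑_{k=1}^{j} B n k = B (n+1) j
lemma B_sum' (n : ℕ) : ∀ j, 1 ≤ j → j ≤ n → ∑ k ∈ Finset.Icc 1 j, B n k = B (n + 1) j := by
  intro j
  induction j with
  | zero => omega
  | succ j ih =>
    intro _ hjn
    rcases Nat.eq_or_lt_of_le (by omega : 1 ≤ j + 1) with h1 | h1
    · rw [← h1]; simp [B]
    · have hj : 1 ≤ j := by omega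
      rw [Finset.sum_Icc_succ_top (by omega : 1 ≤ j + 1), ih hj (by omega),
        B_pascal hj hjn]

lemma B_sum (n : ℕ) (hn : 1 ≤ n) (j : ℕ) (hj1 : 1 ≤ j) (hj2 : j ≤ n + 1) :
    ∑ k ∈ Finset.Icc 1 (min j n), B n k = B (n + 1) j := by
  rcases Nat.lt_or_ge j (n + 1) with h | h
  · rw [min_eq_left (by omega), B_sum' n j hj1 (by omega)]
  · have hj : j = n + 1 := by omega
    subst hj
    rw [min_eq_right (by omega), B_sum' n n hn le_rfl, B_diag hn]


lemma w_eq_B : ∀ n, 1 ≤ n → ∀ j, 1 ≤ j → j ≤ n → w n j = B n j := by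
  intro n
  induction n with
  | zero => omega
  | succ n ih =>
    intro _ j hj1 hj2
    rcases Nat.eq_zero_or_pos n with rfl | hn
    · interval_cases j
      · exact w_one
    · rw [w_succ n j hn hj1 hj2, ← B_sum n hn j hj1 hj2]
      refine Finset.sum_congr rfl fun k hk => ?_
      simp only [Finset.mem_Icc] at hk
      exact ih hn k hk.1 (le_trans hk.2 (min_le_right _ _))

lemma catalan_sub (m : ℕ) (hm : 1 ≤ m) :
    catalan m = Nat.choose (2 * m) m - Nat.choose (2 * m) (m + 1) := by
  have hc : (m + 1) * catalan m = Nat.choose (2 * m) m := by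
    rw [succ_mul_catalan_eq_centralBinom]; rfl
  have h1 : Nat.choose (2 * m) (m + 1) * (m + 1) = Nat.choose (2 * m) m * m := by
    have := Nat.choose_succ_right_eq (2 * m) m
    rwa [show 2 * m - m = m by omega] at this
  have h2 : Nat.choose (2 * m) (m + 1) ≤ Nat.choose (2 * m) m := by
    have := Nat.choose_le_middle (m + 1) (2 * m)
    rwa [show 2 * m / 2 = m by omega] at this
  have h5 : (m + 1) * Nat.choose (2 * m) m = (m + 1) * (catalan m + Nat.choose (2 * m) (m + 1)) := by
    rw [Nat.mul_add, hc]
    have h1' : (m + 1) * Nat.choose (2 * m) (m + 1) = Nat.choose (2 * m) m * m := by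
      rw [mul_comm]; exact h1
    rw [h1']; ring
  have h6 := Nat.eq_of_mul_eq_mul_left (by omega : 0 < m + 1) h5
  omega

-- total
lemma total_w (m : ℕ) (hm : 1 ≤ m) :
    ∑ k ∈ Finset.Icc 1 m, w m k = catalan m := by
  have h1 : ∑ k ∈ Finset.Icc 1 m, w m k = ∑ k ∈ Finset.Icc 1 (min (m + 1) m), B m k := by
    rw [min_eq_right (by omega)]
    exact Finset.sum_congr rfl fun k hk => by
      simp only [Finset.mem_Icc] at hk
      exact w_eq_B m hm k hk.1 hk.2
  rw [h1, B_sum m hm (m + 1) (by omega) le_rfl]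
  obtain ⟨s, rfl⟩ : ∃ s, m = s + 1 := ⟨m - 1, by omega⟩
  show Nat.choose (s + 1 + 1 + s) (s + 1) - Nat.choose (s + 1 + 1 + s) s = catalan (s + 1)
  rw [catalan_sub (s + 1) (by omega)]
  rw [show s + 1 + 1 + s = 2 * (s + 1) by ring]
  congr 1
  have := Nat.choose_symm (by omega : s + 1 + 1 ≤ 2 * (s + 1))
  rw [show 2 * (s + 1) - (s + 1 + 1) = s by omega] at this
  omega

lemma hockey (i m a : ℕ) (ha : a ≤ m + 1) :
    ∑ s ∈ Finset.Icc a m, Nat.choose s i + Nat.choose a (i + 1) = Nat.choose (m + 1) (i + 1) := by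
  rcases le_or_gt a i with h | h
  · rw [Nat.choose_eq_zero_of_lt (by omega : a < i + 1), add_zero]
    rcases lt_or_ge m i with h2 | h2
    · rw [Finset.sum_eq_zero, Nat.choose_eq_zero_of_lt (by omega)]
      intro s hs
      simp only [Finset.mem_Icc] at hs
      exact Nat.choose_eq_zero_of_lt (by omega)
    · rw [← Nat.sum_Icc_choose m i]
      refine (Finset.sum_subset ?_ ?_).symm
      · intro x hx; simp only [Finset.mem_Icc] at *; omega
      · intro x hx hx2; simp only [Finset.mem_Icc] at *
        exact Nat.choose_eq_zero_of_lt (by omega)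
  · have h1 := Nat.sum_Icc_choose m i
    have h2 := Nat.sum_Icc_choose (a - 1) i
    rw [show a - 1 + 1 = a by omega] at h2
    have h3 : ∑ s ∈ Finset.Ico i a, Nat.choose s i + ∑ s ∈ Finset.Ico a (m + 1), Nat.choose s i
        = ∑ s ∈ Finset.Ico i (m + 1), Nat.choose s i :=
      Finset.sum_Ico_consecutive _ (by omega) (by omega)
    rw [show Finset.Ico i a = Finset.Icc i (a - 1) by rw [← Finset.Ico_add_one_right_eq_Icc]; congr 1; omega,
      show Finset.Ico a (m + 1) = Finset.Icc a m from Finset.Ico_add_one_right_eq_Icc a m,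
      show Finset.Ico i (m + 1) = Finset.Icc i m from Finset.Ico_add_one_right_eq_Icc i m] at h3
    omega

lemma b_rec (m i : ℕ) (hm : 1 ≤ m) :
    b (m + 1) i + b m (i + 1) = Nat.choose (m + 1) (i + 1) * catalan m := by
  have step1 : b (m + 1) i =
      ∑ j ∈ Finset.Icc 1 (m + 1), ∑ k ∈ Finset.Icc 1 (min j m), Nat.choose (j - 1) i * w m k := by
    refine Finset.sum_congr rfl fun j hj => ?_
    simp only [Finset.mem_Icc] at hj
    rw [w_succ m j hm hj.1 hj.2, Finset.mul_sum]
  have step2 : b (m + 1) i =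
      ∑ k ∈ Finset.Icc 1 m, ∑ j ∈ Finset.Icc k (m + 1), Nat.choose (j - 1) i * w m k := by
    rw [step1]
    refine Finset.sum_comm' ?_
    intro j k
    simp only [Finset.mem_Icc, le_min_iff]
    omega
  have step3 : ∀ k ∈ Finset.Icc 1 m,
      ∑ j ∈ Finset.Icc k (m + 1), Nat.choose (j - 1) i
        = ∑ s ∈ Finset.Icc (k - 1) m, Nat.choose s i := by
    intro k hk
    simp only [Finset.mem_Icc] at hk
    rw [show Finset.Icc k (m + 1) = (Finset.Icc (k - 1) m).image (· + 1) by
      rw [Finset.image_add_right_Icc]; congr 1; omega,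
      Finset.sum_image (by intro x _ y _ h; simp only at h; omega)]
    refine Finset.sum_congr rfl fun s _ => by norm_num
  calc b (m + 1) i + b m (i + 1)
      = ∑ k ∈ Finset.Icc 1 m,
          ((∑ s ∈ Finset.Icc (k - 1) m, Nat.choose s i) + Nat.choose (k - 1) (i + 1)) * w m k := by
        rw [step2, b, ← Finset.sum_add_distrib]
        refine Finset.sum_congr rfl fun k hk => ?_
        rw [← Finset.sum_mul, add_mul, step3 k hk]
    _ = ∑ k ∈ Finset.Icc 1 m, Nat.choose (m + 1) (i + 1) * w m k := by
        refine Finset.sum_congr rfl fun k hk => ?_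
        simp only [Finset.mem_Icc] at hk
        rw [hockey i m (k - 1) (by omega)]
    _ = Nat.choose (m + 1) (i + 1) * catalan m := by
        rw [← Finset.mul_sum, total_w m hm]


end BorelAux

/-- For all `n ≥ 1` and all `i ≥ 1`:
`b_{i-1}(n) + b_i(n-1) = binom(n, i)·C_{n-1}`. -/
theorem betti_recursion_catalan (n : ℕ) (hn : 1 ≤ n) (i : ℕ) (hi : 1 ≤ i) :
    b n (i - 1) + b (n - 1) i = Nat.choose n i * catalan (n - 1) := by
  obtain ⟨i', rfl⟩ : ∃ i', i = i' + 1 := ⟨i - 1, by omega⟩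
  rcases Nat.lt_or_ge n 2 with h | h
  · have hn1 : n = 1 := by omega
    subst hn1
    simp only [Nat.add_sub_cancel, Nat.sub_self]
    have hb0 : b 0 (i' + 1) = 0 := by simp [b]
    have hb1 : b 1 i' = Nat.choose 0 i' := by
      simp [b, BorelAux.w_one]
    rw [hb0, hb1, catalan_zero, mul_one, add_zero]
    rcases i' with _ | k
    · decide
    · rw [Nat.choose_eq_zero_of_lt (by omega), Nat.choose_eq_zero_of_lt (by omega)]
  · obtain ⟨m, rfl⟩ : ∃ m, n = m + 1 := ⟨n - 1, by omega⟩
    have hm : 1 ≤ m := by omega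
    simp only [Nat.add_sub_cancel]
    exact BorelAux.b_rec m i' hm
end

section
/- Define b_i(n) = Σ_{j=1}^{n} binom(j−1, i)·w_j(n), where w_j(n) is the number of weakly increasing sequences (a_1,…,a_n) of positive integers with a_t ≤ t for all t and a_n = j. Then for all n ≥ 1 and all i ≥ 0, n·b_i(n) = binom(2n, n−i−1)·binom(n+i−1, i). In particular b_i(n) = (1/n)·binom(2n, n−i−1)·binom(n+i−1, i). -/
/-! ### Auxiliary: an explicit `Finset` model of `borelGens` -/

def G : ℕ → Finset (List ℕ)
  | 0 => {[]}
  | n+1 => (G n).biUnion (fun l =>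
      (Finset.Icc (l.getLast?.getD 1) (n+1)).image (fun j => l ++ [j]))

lemma mem_G_iff (n : ℕ) (l : List ℕ) : l ∈ G n ↔ l ∈ borelGens n := by
  induction n generalizing l with
  | zero =>
    simp only [G, Finset.mem_singleton, borelGens, Set.mem_setOf_eq]
    constructor
    · rintro rfl; simp [List.Chain']
    · rintro ⟨h, -, -⟩; exact List.length_eq_zero_iff.mp h
  | succ n ih =>
    simp only [G, Finset.mem_biUnion, Finset.mem_image, Finset.mem_Icc]
    constructor
    · rintro ⟨l', hl', j, ⟨hj1, hj2⟩, rfl⟩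
      obtain ⟨hlen, hch, hbd⟩ := (ih l').mp hl'
      refine ⟨by simp [hlen], ?_, ?_⟩
      · unfold List.Chain'; rw [List.isChain_append]
        refine ⟨hch, List.isChain_singleton j, ?_⟩
        intro x hx y hy
        simp only [List.head?_cons, Option.mem_def, Option.some.injEq] at hy
        subst hy
        calc x ≤ l'.getLast?.getD 1 := le_of_eq (by rw [Option.mem_def.mp hx]; rfl)
        _ ≤ j := hj1
      · intro t ht
        simp only [List.length_append, List.length_singleton, hlen] at ht
        rcases Nat.lt_succ_iff_lt_or_eq.mp ht with ht' | rfl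
        · rw [List.getD_append _ _ _ _ (by omega)]
          exact hbd t (by omega)
        · rw [List.getD_append_right _ _ _ _ (by omega), hlen]
          simp only [Nat.sub_self, List.getD_cons_zero]
          constructor
          · rcases l'.eq_nil_or_concat with rfl | ⟨l'', c, rfl⟩
            · simpa using hj1
            · simp only [List.concat_eq_append] at hj1 hbd hlen
              refine le_trans ?_ hj1
              have : 1 ≤ c := by
                have := hbd (l''.length) (by simp [← hlen])
                rw [List.getD_append_right _ _ _ _ (le_refl _)] at this
                simpa using this.1
              rw [List.getLast?_concat]
              simpa using this
          · omega
    · rintro ⟨hlen, hch, hbd⟩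
      have hne : l ≠ [] := by intro h; subst h; simp at hlen
      obtain ⟨l', a, rfl⟩ := l.eq_nil_or_concat.resolve_left hne
      simp only [List.concat_eq_append] at hlen hch hbd ⊢
      have hlen' : l'.length = n := by simpa using hlen
      unfold List.Chain' at hch; rw [List.isChain_append] at hch
      obtain ⟨hch', -, hlast⟩ := hch
      have hbd' : ∀ t < l'.length, 1 ≤ l'.getD t 0 ∧ l'.getD t 0 ≤ t + 1 := by
        intro t ht
        have := hbd t (by simp; omega)
        rwa [List.getD_append _ _ _ _ ht] at this
      have ha := hbd l'.length (by simp)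
      rw [List.getD_append_right _ _ _ _ (le_refl _), Nat.sub_self] at ha
      simp only [List.getD_cons_zero] at ha
      refine ⟨l', (ih l').mpr ⟨hlen', hch', hbd'⟩, a, ⟨?_, by omega⟩, rfl⟩
      rcases l'.eq_nil_or_concat with rfl | ⟨l'', c, rfl⟩
      · simpa using ha.1
      · have : (l''.concat c).getLast? = some c := by
          rw [List.concat_eq_append]; exact List.getLast?_concat
        rw [this]
        simp only [Option.getD_some]
        exact hlast c this a rfl

def f (n j : ℕ) : ℕ :=
  ((G n).filter (fun l => l.getLast? = some j)).card

lemma w_eq_f (n j : ℕ) : w n j = f n j := by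
  rw [w, f, ← Set.ncard_coe_finset]
  congr 1
  ext l
  simp [mem_G_iff, Set.mem_setOf_eq]

/-- every element of `G n` for `n ≥ 1` ends in some `k ∈ [1,n]`. -/
lemma G_last (n : ℕ) (hn : 1 ≤ n) {l : List ℕ} (hl : l ∈ G n) :
    ∃ k, l.getLast? = some k ∧ 1 ≤ k ∧ k ≤ n := by
  obtain ⟨hlen, -, hbd⟩ := (mem_G_iff n l).mp hl
  have hne : l ≠ [] := by intro h; subst h; simp at hlen; omega
  obtain ⟨l', a, rfl⟩ := l.eq_nil_or_concat.resolve_left hne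
  simp only [List.concat_eq_append] at hlen hbd ⊢
  have ha := hbd l'.length (by simp)
  rw [List.getD_append_right _ _ _ _ (le_refl _), Nat.sub_self] at ha
  simp only [List.getD_cons_zero] at ha
  refine ⟨a, List.getLast?_concat, ha.1, ?_⟩
  have : l'.length + 1 = n := by simpa using hlen
  omega

lemma f_eq_zero (n k : ℕ) (h : k = 0 ∨ n < k) : f n k = 0 := by
  rw [f, Finset.card_eq_zero, Finset.filter_eq_empty_iff]
  intro l hl hlast
  rcases Nat.eq_zero_or_pos n with rfl | hn
  · have := (mem_G_iff 0 l).mp hl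
    have : l = [] := List.length_eq_zero_iff.mp this.1
    subst this; simp at hlast
  · obtain ⟨k', hk', h1, h2⟩ := G_last n hn hl
    rw [hk'] at hlast
    simp only [Option.some.injEq] at hlast
    omega

lemma f_succ (n j : ℕ) (hj1 : 1 ≤ j) (hj2 : j ≤ n + 1) :
    f (n+1) j = ((G n).filter (fun l => l.getLast?.getD 1 ≤ j)).card := by
  rw [f]
  apply Finset.card_bij (fun l _ => l.dropLast)
  · intro l hl
    simp only [Finset.mem_filter, G, Finset.mem_biUnion, Finset.mem_image,
      Finset.mem_Icc] at hl
    obtain ⟨⟨l', hl', a, ⟨ha1, ha2⟩, rfl⟩, hlast⟩ := hl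
    rw [List.getLast?_concat] at hlast
    simp only [Option.some.injEq] at hlast
    subst hlast
    simp only [Finset.mem_filter]
    rw [List.dropLast_concat]
    exact ⟨hl', ha1⟩
  · intro l₁ h₁ l₂ h₂ hd
    simp only [Finset.mem_filter] at h₁ h₂
    have e₁ := List.dropLast_append_getLast? _ h₁.2
    have e₂ := List.dropLast_append_getLast? _ h₂.2
    rw [← e₁, ← e₂, hd]
  · intro l hl
    simp only [Finset.mem_filter] at hl
    refine ⟨l ++ [j], ?_, by rw [List.dropLast_concat]⟩
    simp only [Finset.mem_filter, G, Finset.mem_biUnion, Finset.mem_image,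
      Finset.mem_Icc]
    exact ⟨⟨l, hl.1, j, ⟨hl.2, hj2⟩, rfl⟩, List.getLast?_concat⟩

lemma filter_lo (n j : ℕ) (hn : 1 ≤ n) :
    (G n).filter (fun l => l.getLast?.getD 1 ≤ j) =
      (Finset.Icc 1 j).biUnion (fun k => (G n).filter (fun l => l.getLast? = some k)) := by
  ext l
  simp only [Finset.mem_filter, Finset.mem_biUnion, Finset.mem_Icc]
  constructor
  · rintro ⟨hl, hlo⟩
    obtain ⟨k, hk, h1, h2⟩ := G_last n hn hl
    rw [hk] at hlo
    simp only [Option.getD_some] at hlo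
    exact ⟨k, ⟨h1, hlo⟩, hl, hk⟩
  · rintro ⟨k, ⟨h1, h2⟩, hl, hk⟩
    refine ⟨hl, ?_⟩
    rw [hk]; simpa using h2

lemma f_rec (n j : ℕ) (hn : 1 ≤ n) (hj1 : 1 ≤ j) (hj2 : j ≤ n + 1) :
    f (n+1) j = ∑ k ∈ Finset.Icc 1 j, f n k := by
  rw [f_succ n j hj1 hj2, filter_lo n j hn, Finset.card_biUnion ?_]
  · rfl
  · intro k₁ _ k₂ _ hne
    simp only [Finset.disjoint_filter]
    intro l _ h1 h2
    rw [h1] at h2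
    simp only [Option.some.injEq] at h2
    exact hne h2

/-! ### The recurrence for `b` -/

lemma b_eq_f (n i : ℕ) : b n i = ∑ j ∈ Finset.Icc 1 n, Nat.choose (j - 1) i * f n j := by
  rw [b]
  exact Finset.sum_congr rfl fun j _ => by rw [w_eq_f]

open Finset in
lemma hockey (N i : ℕ) : ∑ j ∈ Icc 1 N, (j-1).choose i = N.choose (i+1) := by
  induction N with
  | zero => simp
  | succ N ih =>
    rw [Finset.sum_Icc_succ_top (by omega), ih]
    simp only [Nat.add_sub_cancel]
    rw [Nat.choose_succ_succ']
    omega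

open Finset in
lemma b_rec (n i : ℕ) (hn : 1 ≤ n) :
    b (n+1) i + b n (i+1) = (n+1).choose (i+1) * b n 0 := by
  rw [b_eq_f, b_eq_f, b_eq_f]
  have hbn : ∀ i', ∑ k ∈ Icc 1 n, (k-1).choose i' * f n k
      = ∑ k ∈ Icc 1 (n+1), (k-1).choose i' * f n k := by
    intro i'
    rw [Finset.sum_Icc_succ_top (by omega), f_eq_zero n (n+1) (by omega), Nat.mul_zero,
      Nat.add_zero]
  have h1 : ∑ j ∈ Icc 1 (n+1), (j-1).choose i * f (n+1) j
      = ∑ j ∈ Icc 1 (n+1), ∑ k ∈ Icc 1 (n+1),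
          (if k ≤ j then (j-1).choose i * f n k else 0) := by
    apply Finset.sum_congr rfl
    intro j hj
    simp only [mem_Icc] at hj
    rw [f_rec n j hn hj.1 hj.2, Finset.mul_sum]
    rw [show Icc 1 j = (Icc 1 (n+1)).filter (fun k => k ≤ j) by
      ext k; simp only [mem_Icc, mem_filter]; omega]
    rw [Finset.sum_filter]
  rw [h1, Finset.sum_comm]
  have h2 : ∀ k ∈ Icc 1 (n+1),
      (∑ j ∈ Icc 1 (n+1), if k ≤ j then (j-1).choose i * f n k else 0)
        + (k-1).choose (i+1) * f n k
      = (n+1).choose (i+1) * f n k := by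
    intro k hk
    simp only [mem_Icc] at hk
    have : (∑ j ∈ Icc 1 (n+1), if k ≤ j then (j-1).choose i * f n k else 0)
        = (∑ j ∈ Icc k (n+1), (j-1).choose i) * f n k := by
      rw [Finset.sum_mul]
      rw [show Icc k (n+1) = (Icc 1 (n+1)).filter (fun j => k ≤ j) by
        ext j; simp only [mem_Icc, mem_filter]; omega]
      rw [Finset.sum_filter]
    rw [this, ← Nat.add_mul]
    congr 1
    have hsplit : ∑ j ∈ Icc 1 (k-1), (j-1).choose i + ∑ j ∈ Icc k (n+1), (j-1).choose i
        = ∑ j ∈ Icc 1 (n+1), (j-1).choose i := by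
      rw [show Icc 1 (k-1) = Ico 1 k by rw [← Finset.Ico_add_one_right_eq_Icc]; congr 1; omega,
        show Icc k (n+1) = Ico k (n+2) by rw [← Finset.Ico_add_one_right_eq_Icc]; rfl,
        show Icc 1 (n+1) = Ico 1 (n+2) by rw [← Finset.Ico_add_one_right_eq_Icc]; rfl]
      exact Finset.sum_Ico_consecutive _ (by omega) (by omega)
    rw [hockey, hockey] at hsplit
    omega
  rw [hbn (i+1), hbn 0, Finset.mul_sum, ← Finset.sum_add_distrib]
  simp only [Nat.choose_zero_right, Nat.one_mul]
  exact Finset.sum_congr rfl h2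

/-! ### Binomial identities -/

open Nat in
lemma fact_cast_pos (m : ℕ) : (0:ℚ) < (m ! : ℚ) := by
  exact_mod_cast Nat.factorial_pos m

open Nat in
lemma c2 (i k : ℕ) :
    (i+k+2) * ((2*i+2*k+6).choose (k+2) * (2*i+k+2).choose i)
      + (i+k+3) * ((2*i+2*k+4).choose k * (2*i+k+2).choose (i+1))
    = (i+k+3) * (i+k+3).choose (i+1) * (2*i+2*k+4).choose (i+k+1) := by
  have h : ((i:ℚ)+k+2) * ((2*i+2*k+6).choose (k+2) * (2*i+k+2).choose i)
      + ((i:ℚ)+k+3) * ((2*i+2*k+4).choose k * (2*i+k+2).choose (i+1))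
    = ((i:ℚ)+k+3) * (i+k+3).choose (i+1) * (2*i+2*k+4).choose (i+k+1) := by
    rw [Nat.cast_choose ℚ (by omega : k+2 ≤ 2*i+2*k+6),
        Nat.cast_choose ℚ (by omega : i ≤ 2*i+k+2),
        Nat.cast_choose ℚ (by omega : k ≤ 2*i+2*k+4),
        Nat.cast_choose ℚ (by omega : i+1 ≤ 2*i+k+2),
        Nat.cast_choose ℚ (by omega : i+1 ≤ i+k+3),
        Nat.cast_choose ℚ (by omega : i+k+1 ≤ 2*i+2*k+4),
        show 2*i+2*k+6-(k+2) = 2*i+k+4 by omega,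
        show 2*i+k+2-i = i+k+2 by omega,
        show 2*i+2*k+4-k = 2*i+k+4 by omega,
        show 2*i+k+2-(i+1) = i+k+1 by omega,
        show i+k+3-(i+1) = k+2 by omega,
        show 2*i+2*k+4-(i+k+1) = i+k+3 by omega]
    have e1 : ((2*i+2*k+6)! : ℚ)
        = ((2*i+2*k+6)*(2*i+2*k+5)) * (2*i+2*k+4)! := by
      rw [show 2*i+2*k+6 = (2*i+2*k+4)+1+1 by ring]
      push_cast [Nat.factorial_succ]
      ring
    have e2 : ((2*i+k+4)! : ℚ) = ((2*i+k+4)*(2*i+k+3)) * (2*i+k+2)! := by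
      rw [show 2*i+k+4 = (2*i+k+2)+1+1 by ring]
      push_cast [Nat.factorial_succ]
      ring
    have e3 : ((i+k+2)! : ℚ) = (i+k+2) * (i+k+1)! := by
      rw [show i+k+2 = (i+k+1)+1 by ring]
      push_cast [Nat.factorial_succ]
      ring
    have e4 : ((i+k+3)! : ℚ) = ((i+k+3)*(i+k+2)) * (i+k+1)! := by
      rw [show i+k+3 = (i+k+1)+1+1 by ring]
      push_cast [Nat.factorial_succ]
      ring
    have e5 : ((k+2)! : ℚ) = ((k+2)*(k+1)) * k ! := by
      rw [show k+2 = k+1+1 by ring]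
      push_cast [Nat.factorial_succ]
      ring
    have e6 : ((i+1)! : ℚ) = (i+1) * i ! := by
      push_cast [Nat.factorial_succ]
      ring
    rw [e1, e2, e3, e4, e5, e6]
    have n1 := (fact_cast_pos (2*i+2*k+4)).ne'
    have n2 := (fact_cast_pos (2*i+k+2)).ne'
    have n3 := (fact_cast_pos (i+k+1)).ne'
    have n4 := (fact_cast_pos k).ne'
    have n5 := (fact_cast_pos i).ne'
    field_simp
    ring
  exact_mod_cast h

open Nat in
lemma c1 (m : ℕ) : 2*(m+1) * ((2*m+1).choose m) = (m+2) * ((2*m+2).choose m) := by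
  have h : (2*((m:ℚ)+1)) * ((2*m+1).choose m) = ((m:ℚ)+2) * ((2*m+2).choose m) := by
    rw [Nat.cast_choose ℚ (by omega : m ≤ 2*m+1),
        Nat.cast_choose ℚ (by omega : m ≤ 2*m+2),
        show 2*m+1-m = m+1 by omega, show 2*m+2-m = m+2 by omega]
    have e1 : ((2*m+2)! : ℚ) = (2*m+2) * (2*m+1)! := by
      rw [show 2*m+2 = (2*m+1)+1 by ring]; push_cast [Nat.factorial_succ]; ring
    have e2 : ((m+2)! : ℚ) = (m+2) * (m+1)! := by
      rw [show m+2 = (m+1)+1 by ring]; push_cast [Nat.factorial_succ]; ring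
    rw [e1, e2]
    have n1 := (fact_cast_pos (2*m+1)).ne'
    have n2 := (fact_cast_pos (m+1)).ne'
    have n3 := (fact_cast_pos m).ne'
    field_simp
  exact_mod_cast h

def T (n i : ℕ) : ℕ :=
  if n ≤ i then 0 else Nat.choose (2 * n) (n - i - 1) * Nat.choose (n + i - 1) i

lemma star (n i : ℕ) (hn : 1 ≤ n) :
    n * T (n+1) i + (n+1) * T n (i+1)
      = (n+1) * (n+1).choose (i+1) * (2*n).choose (n-1) := by
  obtain ⟨m, rfl⟩ : ∃ m, n = m+1 := ⟨n-1, by omega⟩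
  rcases lt_trichotomy i (m+1) with hi | rfl | hi
  · rcases Nat.lt_or_ge i m with him | him
    · obtain ⟨k, rfl⟩ : ∃ k, m = i+k+1 := ⟨m-i-1, by omega⟩
      simp only [T, if_neg (by omega : ¬ (i+k+1+1+1 ≤ i)),
        if_neg (by omega : ¬ (i+k+1+1 ≤ i+1))]
      rw [show 2*(i+k+1+1+1) = 2*i+2*k+6 by ring,
        show i+k+1+1+1-i-1 = k+2 by omega,
        show i+k+1+1+1+i-1 = 2*i+k+2 by omega,
        show 2*(i+k+1+1) = 2*i+2*k+4 by ring,
        show i+k+1+1-(i+1)-1 = k by omega,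
        show i+k+1+1+(i+1)-1 = 2*i+k+2 by omega,
        show i+k+1+1-1 = i+k+1 by omega]
      have := c2 i k
      rw [show i+k+2 = i+k+1+1 by ring, show i+k+3 = i+k+1+1+1 by ring] at this
      exact this
    · have : i = m := by omega
      subst this
      simp only [T, if_neg (by omega : ¬ (i+1+1 ≤ i)),
        if_pos (by omega : i+1 ≤ i+1), Nat.mul_zero, Nat.add_zero]
      rw [show 2*(i+1+1) = 2*i+4 by ring,
        show i+1+1-i-1 = 1 by omega,
        show i+1+1+i-1 = 2*i+1 by omega,
        show i+1-1 = i by omega,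
        Nat.choose_one_right,
        Nat.choose_succ_self_right]
      have h := c1 i
      rw [show 2*(i+1) = 2*i+2 by ring]
      calc (i+1) * ((2*i+4) * (2*i+1).choose i)
          = (i+2) * (2*(i+1) * ((2*i+1).choose i)) := by ring
        _ = (i+2) * ((i+2) * ((2*i+2).choose i)) := by rw [h]
        _ = (i+1+1) * (i+2) * (2*i+2).choose i := by ring
  · simp only [T, if_neg (by omega : ¬ (m+1+1 ≤ m+1)),
      if_pos (by omega : m+1 ≤ m+1+1), Nat.mul_zero, Nat.add_zero]
    rw [show 2*(m+1+1) = 2*m+4 by ring,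
      show m+1+1-(m+1)-1 = 0 by omega,
      show m+1+1+(m+1)-1 = 2*m+2 by omega,
      show m+1-1 = m by omega,
      Nat.choose_zero_right, Nat.one_mul,
      Nat.choose_self, Nat.mul_one,
      show 2*(m+1) = 2*m+2 by ring]
    have h := Nat.choose_succ_right_eq (2*m+2) m
    rw [show 2*m+2-m = m+2 by omega] at h
    calc (m+1) * (2*m+2).choose (m+1)
        = (2*m+2).choose (m+1) * (m+1) := Nat.mul_comm _ _
      _ = (2*m+2).choose m * (m+2) := h
      _ = (m+1+1) * (2*m+2).choose m := by ring
  · simp only [T, if_pos (by omega : m+1+1 ≤ i), if_pos (by omega : m+1 ≤ i+1),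
      Nat.mul_zero, Nat.add_zero, Nat.zero_add]
    rw [Nat.choose_eq_zero_of_lt (by omega : m+1+1 < i+1)]
    ring

/-! ### Main theorem -/

lemma main_aux : ∀ n, 1 ≤ n → ∀ i, n * b n i = T n i := by
  intro n hn
  induction n, hn using Nat.le_induction with
  | base =>
    intro i
    have hf11 : f 1 1 = 1 := by decide
    have hb : b 1 i = Nat.choose 0 i := by
      rw [b_eq_f]
      simp [hf11]
    rw [hb, Nat.one_mul, T]
    rcases Nat.eq_zero_or_pos i with rfl | hi
    · simp
    · rw [if_pos (by omega : 1 ≤ i), Nat.choose_eq_zero_of_lt (by omega : 0 < i)]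
  | succ n hn IH =>
    intro i
    have hrec := b_rec n i hn
    have hT0 : T n 0 = (2*n).choose (n-1) := by
      rw [T, if_neg (by omega)]
      simp
    have key : (n*(n+1)) * b (n+1) i + (n+1) * T n (i+1)
        = n * T (n+1) i + (n+1) * T n (i+1) := by
      calc (n*(n+1)) * b (n+1) i + (n+1) * T n (i+1)
          = (n*(n+1)) * b (n+1) i + (n+1) * (n * b n (i+1)) := by rw [IH]
        _ = (n+1) * n * (b (n+1) i + b n (i+1)) := by ring
        _ = (n+1) * n * ((n+1).choose (i+1) * b n 0) := by rw [hrec]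
        _ = (n+1) * (n+1).choose (i+1) * (n * b n 0) := by ring
        _ = (n+1) * (n+1).choose (i+1) * T n 0 := by rw [IH 0]
        _ = (n+1) * (n+1).choose (i+1) * ((2*n).choose (n-1)) := by rw [hT0]
        _ = n * T (n+1) i + (n+1) * T n (i+1) := (star n i hn).symm
    have key2 : n * ((n+1) * b (n+1) i) = n * T (n+1) i := by
      rw [← Nat.mul_assoc]
      omega
    exact Nat.eq_of_mul_eq_mul_left (by omega) key2

/-- Closed form: `n·b_i(n) = binom(2n, n-i-1)·binom(n+i-1, i)` for `n ≥ 1`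
and all `i ≥ 0` (with the convention `binom(a,b) = 0` for `b < 0`, i.e. the
right side vanishes when `i ≥ n`). -/
theorem betti_closed_form (n : ℕ) (hn : 1 ≤ n) (i : ℕ) :
    n * b n i =
      if n ≤ i then 0
      else Nat.choose (2 * n) (n - i - 1) * Nat.choose (n + i - 1) i := by
  rw [main_aux n hn i, T]
end
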